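/- arXiv:1711.02628 — 3 statements merged into one kernel-verified Lean document; each statement's English description precedes it below -/
import Mathlib

section
/- Let V be a lattice with elementary divisors a₁,...,a_m (with aᵢ | aᵢ₊₁), and let p be a prime such that p divides a_{s+1} but p does not divide aⱼ for all j ≤ s. Then the ℤ/p-vector space V_p/V_p^⊥ has dimension s, where V_p = V/pV carries the induced ℤ/p-bilinear form and V_p^⊥ is its radical. -/
open Matrix

/-- Let `V` be a lattice with elementary divisors `a₁,…,a_m` (with `aᵢ ∣ aᵢ₊₁`), and
let `p` be a prime dividing `a_{s+1}` but none of `a₁,…,a_s`.  Then the `ℤ/p`-vector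
space `V_p / V_p^⊥` has dimension `s`, where `V_p = V/pV` with the induced bilinear
form (identified, via the basis in which the intersection matrix is `A`, with
`(ℤ/p)^μ` equipped with the form given by `A mod p`). -/
theorem rank_mod_p_eq_of_elementary_divisors (μ m s : ℕ) (hm : m ≤ μ) (hsm : s < m)
    (hsμ : s < μ)
    (A U T : Matrix (Fin μ) (Fin μ) ℤ) (a : Fin μ → ℤ)
    (hAsymm : A.IsSymm)
    (hU : U.det = 1 ∨ U.det = -1) (hT : T.det = 1 ∨ T.det = -1)
    (hS : U * A * T = Matrix.diagonal a)
    (hanz : ∀ i : Fin μ, (i : ℕ) < m → a i ≠ 0)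
    (haz : ∀ i : Fin μ, m ≤ (i : ℕ) → a i = 0)
    (hadvd : ∀ i j : Fin μ, i ≤ j → a i ∣ a j)
    (p : ℕ) [Fact p.Prime]
    (hps : (p : ℤ) ∣ a ⟨s, hsμ⟩)
    (hpnd : ∀ j : Fin μ, (j : ℕ) < s → ¬ (p : ℤ) ∣ a j) :
    Module.finrank (ZMod p)
      ((Fin μ → ZMod p) ⧸
        LinearMap.ker (Matrix.mulVecLin (A.map (Int.cast : ℤ → ZMod p)))) = s := by
  classical
  set f : ℤ →+* ZMod p := Int.castRingHom (ZMod p)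
  set B : Matrix (Fin μ) (Fin μ) (ZMod p) := A.map (Int.cast : ℤ → ZMod p)
  -- finrank of quotient = rank of B
  have h1 : Module.finrank (ZMod p)
      ((Fin μ → ZMod p) ⧸ LinearMap.ker B.mulVecLin) = B.rank := by
    rw [Matrix.rank]
    exact LinearEquiv.finrank_eq (LinearMap.quotKerEquivRange _)
  rw [h1]
  -- relate B to diagonal via invertible U, T mod p
  have hmap : (U.map f) * B * (T.map f) = Matrix.diagonal (fun i => f (a i)) := by
    have : ((U * A * T).map f) = Matrix.diagonal (fun i => f (a i)) := by
      rw [hS]; exact Matrix.diagonal_map (map_zero f)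
    rw [← this, Matrix.map_mul, Matrix.map_mul]; rfl
  have hUdet : IsUnit (U.map f).det := by
    rw [← RingHom.mapMatrix_apply, ← RingHom.map_det]
    rcases hU with h | h <;> simp [h]
  have hTdet : IsUnit (T.map f).det := by
    rw [← RingHom.mapMatrix_apply, ← RingHom.map_det]
    rcases hT with h | h <;> simp [h]
  have h2 : B.rank = (Matrix.diagonal (fun i => f (a i))).rank := by
    rw [← hmap, Matrix.rank_mul_eq_left_of_isUnit_det _ _ hTdet,
      Matrix.rank_mul_eq_right_of_isUnit_det _ _ hUdet]
  rw [h2, Matrix.rank_diagonal]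
  -- count nonzero diagonal entries
  have hkey : ∀ i : Fin μ, f (a i) ≠ 0 ↔ (i : ℕ) < s := by
    intro i
    constructor
    · intro h
      by_contra hns
      push_neg at hns
      have hdvd : (p : ℤ) ∣ a i :=
        dvd_trans hps (hadvd ⟨s, hsμ⟩ i (by exact hns))
      exact h ((ZMod.intCast_zmod_eq_zero_iff_dvd _ _).mpr hdvd)
    · intro h hz
      exact hpnd i h ((ZMod.intCast_zmod_eq_zero_iff_dvd _ _).mp hz)
  have : Fintype.card {i : Fin μ // f (a i) ≠ 0}
      = Fintype.card {i : Fin μ // (i : ℕ) < s} := by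
    apply Fintype.card_congr
    exact Equiv.subtypeEquivRight hkey
  rw [this]
  rw [Fintype.card_congr (Equiv.subtypeEquivRight (fun i : Fin μ =>
    (Iff.rfl : ((i : ℕ) < s ↔ (i : ℕ) < s))))]
  -- card {i : Fin μ // i.val < s} = s
  have e : {i : Fin μ // (i : ℕ) < s} ≃ Fin s :=
    ⟨fun i => ⟨i.1, i.2⟩, fun j => ⟨⟨j, lt_trans j.2 hsμ⟩, j.2⟩,
      fun i => rfl, fun j => rfl⟩
  rw [Fintype.card_congr e, Fintype.card_fin]
end

section
/- Two linear subspaces ℙ^{n/2}_{a,b} and ℙ^{n/2}_{a',b'} of the Fermat variety, given by the data (a,b) and (a',b') in the canonical form (b₀ = 0 and for even i, bᵢ minimal among unused indices), are equal as subvarieties of ℙ^{n+1} if and only if (a,b) = (a',b'). -/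
open Complex

/-- The (affine cone over the) linear subspace `ℙ^{n/2}_{a,b}` of the Fermat variety:
solutions of `x_{b_{2k}} − ζ_{2d}^{1+2a_{2k+1}} x_{b_{2k+1}} = 0` for `k = 0,…,n/2`. -/
def linearCycleSet (n d : ℕ) (a : Fin (n / 2 + 1) → Fin d)
    (b : Equiv.Perm (Fin (n + 2))) : Set (Fin (n + 2) → ℂ) :=
  {x | ∀ k : Fin (n / 2 + 1),
    x (b ⟨2 * (k : ℕ), by have := k.isLt; omega⟩) =
      Complex.exp (2 * Real.pi * Complex.I / (2 * d)) ^ (1 + 2 * (a k : ℕ)) *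
        x (b ⟨2 * (k : ℕ) + 1, by have := k.isLt; omega⟩)}

/-- The canonical-form condition on the permutation `b`: `b₀ = 0` and for each even
index `2k`, `b_{2k}` is the smallest element not among `b₀,…,b_{2k−1}`. -/
def canonicalPerm (n : ℕ) (b : Equiv.Perm (Fin (n + 2))) : Prop :=
  b 0 = 0 ∧
  ∀ (k : ℕ) (hk : 2 * k < n + 2), ∀ j : Fin (n + 2),
    (∀ i : Fin (n + 2), (i : ℕ) < 2 * k → b i ≠ j) → b ⟨2 * k, hk⟩ ≤ j

/-- Two linear subspaces `ℙ^{n/2}_{a,b}` and `ℙ^{n/2}_{a',b'}` of the Fermat variety,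
with `b`, `b'` in canonical form, are equal if and only if `(a,b) = (a',b')`. -/
theorem linearCycleSet_eq_iff (n d : ℕ) (hn : Even n) (hn0 : 0 < n) (hd : 1 ≤ d)
    (a a' : Fin (n / 2 + 1) → Fin d) (b b' : Equiv.Perm (Fin (n + 2)))
    (hb : canonicalPerm n b) (hb' : canonicalPerm n b') :
    linearCycleSet n d a b = linearCycleSet n d a' b' ↔ a = a' ∧ b = b' := by
  refine ⟨fun hS => ?_, fun ⟨h1, h2⟩ => by rw [h1, h2]⟩
  obtain ⟨p0, hp0⟩ := hn
  set ζ : ℂ := Complex.exp (2 * Real.pi * Complex.I / (2 * d)) with hζdef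
  have hprim : IsPrimitiveRoot ζ (2 * d) := by
    have h := Complex.isPrimitiveRoot_exp (2 * d) (by omega)
    rwa [show (((2 * d : ℕ) : ℂ)) = 2 * (d : ℂ) by push_cast; ring] at h
  have hζne : ζ ≠ 0 := Complex.exp_ne_zero _
  have hbval : ∀ (s t : ℕ) (hs : s < n + 2) (ht : t < n + 2),
      b ⟨s, hs⟩ = b ⟨t, ht⟩ ↔ s = t := by
    intro s t hs ht
    constructor
    · intro h
      exact congrArg Fin.val (b.injective h)
    · intro h
      subst h
      rfl
  have main : ∀ m : ℕ, ∀ hm : m < n / 2 + 1,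
      b ⟨2 * m, by omega⟩ = b' ⟨2 * m, by omega⟩ ∧
      b ⟨2 * m + 1, by omega⟩ = b' ⟨2 * m + 1, by omega⟩ ∧
      a ⟨m, hm⟩ = a' ⟨m, hm⟩ := by
    intro m
    induction m using Nat.strong_induction_on with
    | _ m ih =>
    intro hm
    have hmem : ∀ i : Fin (n + 2), (i : ℕ) < 2 * m → b i = b' i := by
      intro i hi
      have hj : (i : ℕ) / 2 < m := by omega
      have hj2 : (i : ℕ) / 2 < n / 2 + 1 := by omega
      obtain ⟨he, ho, -⟩ := ih ((i : ℕ) / 2) hj hj2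
      rcases Nat.even_or_odd (i : ℕ) with h | h
      · obtain ⟨t, ht⟩ := h
        have hieq : i = ⟨2 * ((i : ℕ) / 2), by omega⟩ := Fin.ext (by simp only [Fin.val_mk]; omega)
        rw [hieq]
        exact he
      · obtain ⟨t, ht⟩ := h
        have hieq : i = ⟨2 * ((i : ℕ) / 2) + 1, by omega⟩ := Fin.ext (by simp only [Fin.val_mk]; omega)
        rw [hieq]
        exact ho
    -- even index matches
    have heq0 : b ⟨2 * m, by omega⟩ = b' ⟨2 * m, by omega⟩ := by
      apply le_antisymm
      · apply hb.2 m (by omega)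
        intro i hi hbi
        rw [hmem i hi] at hbi
        have h2 : (i : ℕ) = 2 * m := congrArg Fin.val (b'.injective hbi)
        omega
      · apply hb'.2 m (by omega)
        intro i hi hbi
        rw [← hmem i hi] at hbi
        have h2 : (i : ℕ) = 2 * m := congrArg Fin.val (b.injective hbi)
        omega
    set c : ℂ := ζ ^ (1 + 2 * ((a ⟨m, hm⟩ : Fin d) : ℕ)) with hc
    have hcne : c ≠ 0 := pow_ne_zero _ hζne
    set e : Fin (n + 2) → ℂ := fun i =>
      if i = b ⟨2 * m, by omega⟩ then c
      else if i = b ⟨2 * m + 1, by omega⟩ then 1 else 0 with he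
    have hev : ∀ (s : ℕ) (hs : s < n + 2),
        e (b ⟨s, hs⟩) = if s = 2 * m then c else if s = 2 * m + 1 then 1 else 0 := by
      intro s hs
      simp only [he]
      by_cases h1 : s = 2 * m
      · rw [if_pos ((hbval s (2 * m) hs (by omega)).2 h1), if_pos h1]
      · rw [if_neg (fun h => h1 ((hbval s (2 * m) hs (by omega)).1 h)), if_neg h1]
        by_cases h2 : s = 2 * m + 1
        · rw [if_pos ((hbval s (2 * m + 1) hs (by omega)).2 h2), if_pos h2]
        · rw [if_neg (fun h => h2 ((hbval s (2 * m + 1) hs (by omega)).1 h)), if_neg h2]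
    have heS : e ∈ linearCycleSet n d a b := by
      intro k
      rw [hev (2 * (k : ℕ)) (by have := k.isLt; omega),
        hev (2 * (k : ℕ) + 1) (by have := k.isLt; omega)]
      by_cases hk : (k : ℕ) = m
      · have hkeq : k = ⟨m, hm⟩ := Fin.ext hk
        subst hkeq
        rw [if_pos rfl, if_neg (by omega), if_pos rfl, mul_one]
      · rw [if_neg (by omega), if_neg (by omega), if_neg (by omega), if_neg (by omega),
          mul_zero]
    have heS' : e ∈ linearCycleSet n d a' b' := hS ▸ heS
    have hrel := heS' ⟨m, hm⟩
    rw [← heq0] at hrel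
    rw [hev (2 * m) (by omega), if_pos rfl] at hrel
    have hj : b' ⟨2 * m + 1, by omega⟩ = b ⟨2 * m + 1, by omega⟩ := by
      by_contra hcon
      have hj0 : b' ⟨2 * m + 1, by omega⟩ ≠ b ⟨2 * m, by omega⟩ := by
        rw [heq0]
        intro h
        have h2 : (2 * m + 1 : ℕ) = 2 * m := congrArg Fin.val (b'.injective h)
        omega
      simp only [he] at hrel
      rw [if_neg hj0, if_neg hcon, mul_zero] at hrel
      exact hcne hrel
    refine ⟨heq0, hj.symm, ?_⟩
    rw [hj, hev (2 * m + 1) (by omega), if_neg (by omega), if_pos rfl, mul_one, hc] at hrel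
    have hlt : 1 + 2 * ((a ⟨m, hm⟩ : Fin d) : ℕ) < 2 * d := by
      have := (a ⟨m, hm⟩).isLt; omega
    have hlt' : 1 + 2 * ((a' ⟨m, hm⟩ : Fin d) : ℕ) < 2 * d := by
      have := (a' ⟨m, hm⟩).isLt; omega
    have hexp := hprim.pow_inj hlt hlt' hrel
    exact Fin.ext (by omega)
  constructor
  · funext k
    obtain ⟨kv, hkv⟩ := k
    exact (main kv hkv).2.2
  · apply Equiv.ext
    intro i
    have hiv := i.isLt
    rcases Nat.even_or_odd (i : ℕ) with h | h
    · obtain ⟨t, ht⟩ := h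
      have htlt : t < n / 2 + 1 := by omega
      have hieq : i = ⟨2 * t, by omega⟩ := Fin.ext (by simp only [Fin.val_mk]; omega)
      rw [hieq]
      exact (main t htlt).1
    · obtain ⟨t, ht⟩ := h
      have htlt : t < n / 2 + 1 := by omega
      have hieq : i = ⟨2 * t + 1, by omega⟩ := Fin.ext (by simp only [Fin.val_mk]; omega)
      rw [hieq]
      exact (main t htlt).2.1
end

section
/- The linear subspace ℙ^{n/2+1} ⊂ ℙ^{n+1} defined by x₀ − ζ_{2d}x₁ = x₂ − ζ_{2d}x₃ = ⋯ = x_n − ζ_{2d}x_{n+1} = 0 intersects the Fermat variety x₀^d + ⋯ + x_{n+1}^d = 0 in the union of d linear subspaces of dimension n/2, each of the form ℙ^{n/2}_{a,b}, and any two of these d subspaces intersect in a common linear ℙ^{n/2−1}. -/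
open Complex

lemma sum_pairs_zero_aux (g : ℕ → ℂ) :
    ∀ m, (∀ k < m, g (2 * k) + g (2 * k + 1) = 0) →
      ∑ i ∈ Finset.range (2 * m), g i = 0 := by
  intro m
  induction m with
  | zero => simp
  | succ m ih =>
    intro h
    rw [show 2 * (m + 1) = (2 * m + 1) + 1 by ring, Finset.sum_range_succ,
      Finset.sum_range_succ, ih (fun k hk => h k (by omega)), zero_add]
    exact h m (by omega)

/-- The linear subspace `ℙ^{n/2+1} ⊂ ℙ^{n+1}` defined by
`x₀ − ζ_{2d}x₁ = x₂ − ζ_{2d}x₃ = ⋯ = x_{n−2} − ζ_{2d}x_{n−1} = 0` meets the Fermat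
variety `x₀^d + ⋯ + x_{n+1}^d = 0` in the union of `d` linear subspaces of dimension
`n/2`, each of the form `ℙ^{n/2}_{a,b}` (cut out inside `L` by
`x_n = ζ_{2d}^{1+2j} x_{n+1}`), and any two of these `d` subspaces intersect in the
common linear subspace `ℙ^{n/2−1}` given by `x_n = x_{n+1} = 0` inside `L`. -/
theorem fermat_meets_linear_space_in_d_cycles (n d : ℕ) (hn : Even n) (hn0 : 0 < n)
    (hd : 1 ≤ d) :
    (let ζ : ℂ := Complex.exp (2 * Real.pi * Complex.I / (2 * d))
     let L : Set (Fin (n + 2) → ℂ) :=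
       {x | ∀ (k : ℕ) (hk : 2 * k + 1 < n),
         x ⟨2 * k, by omega⟩ = ζ * x ⟨2 * k + 1, by omega⟩}
     let F : Set (Fin (n + 2) → ℂ) := {x | ∑ i : Fin (n + 2), x i ^ d = 0}
     let P : Fin d → Set (Fin (n + 2) → ℂ) := fun j =>
       {x ∈ L | x ⟨n, by omega⟩ = ζ ^ (1 + 2 * (j : ℕ)) * x ⟨n + 1, by omega⟩}
     (L ∩ F = ⋃ j : Fin d, P j) ∧
       ∀ j j' : Fin d, j ≠ j' →
         P j ∩ P j' = {x ∈ L | x ⟨n, by omega⟩ = 0 ∧ x ⟨n + 1, by omega⟩ = 0}) := by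
  intro ζ L F P
  haveI : NeZero d := ⟨by omega⟩
  have hdC : (d : ℂ) ≠ 0 := Nat.cast_ne_zero.mpr (by omega)
  have hζ0 : ζ ≠ 0 := Complex.exp_ne_zero _
  have hζd : ζ ^ d = -1 := by
    show Complex.exp _ ^ d = -1
    rw [← Complex.exp_nat_mul,
      show (d : ℂ) * (2 * Real.pi * Complex.I / (2 * d)) = Real.pi * Complex.I by
        field_simp]
    exact Complex.exp_pi_mul_I
  have hζ2 : ζ ^ 2 = Complex.exp (2 * Real.pi * Complex.I / d) := by
    show Complex.exp _ ^ 2 = _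
    rw [sq, ← Complex.exp_add]
    congr 1
    field_simp
    ring
  have hprim : IsPrimitiveRoot (ζ ^ 2) d := by
    rw [hζ2]; exact Complex.isPrimitiveRoot_exp d (by omega)
  -- the key sum computation on L
  have hsum : ∀ x ∈ L, ∑ i : Fin (n + 2), x i ^ d =
      x ⟨n, by omega⟩ ^ d + x ⟨n + 1, by omega⟩ ^ d := by
    intro x hx
    set g : ℕ → ℂ := fun i => if h : i < n + 2 then x ⟨i, h⟩ ^ d else 0 with hg
    have h1 : ∑ i : Fin (n + 2), x i ^ d = ∑ i ∈ Finset.range (n + 2), g i := by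
      rw [← Fin.sum_univ_eq_sum_range]
      refine Finset.sum_congr rfl fun i _ => ?_
      simp [hg, i.isLt]
    obtain ⟨m, hm⟩ := hn
    have hm' : n = 2 * m := by omega
    have h0 : ∑ i ∈ Finset.range n, g i = 0 := by
      rw [hm']
      refine sum_pairs_zero_aux g m fun k hk => ?_
      have hk1 : 2 * k + 1 < n := by omega
      have hk2 : 2 * k < n + 2 := by omega
      have hk3 : 2 * k + 1 < n + 2 := by omega
      have hgx : g (2 * k) = (ζ * x ⟨2 * k + 1, by omega⟩) ^ d := by
        rw [hg]; simp only [hk2, dif_pos]; rw [hx k hk1]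
      rw [hgx, hg]
      simp only [hk3, dif_pos]
      rw [mul_pow, hζd]
      ring
    rw [h1, Finset.sum_range_succ, Finset.sum_range_succ, h0, zero_add, hg]
    simp only [dif_pos (show n < n + 2 by omega), dif_pos (show n + 1 < n + 2 by omega)]
  constructor
  · ext x
    simp only [Set.mem_inter_iff, Set.mem_iUnion]
    constructor
    · rintro ⟨hxL, hxF⟩
      have h2 : x ⟨n, by omega⟩ ^ d + x ⟨n + 1, by omega⟩ ^ d = 0 := by
        rw [← hsum x hxL]; exact hxF
      by_cases hb : x ⟨n + 1, by omega⟩ = 0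
      · refine ⟨⟨0, by omega⟩, hxL, ?_⟩
        have ha : x ⟨n, by omega⟩ = 0 := by
          have hpd : x ⟨n, by omega⟩ ^ d = 0 := by
            rw [hb, zero_pow (by omega : d ≠ 0), add_zero] at h2
            exact h2
          exact pow_eq_zero_iff (by omega : d ≠ 0) |>.mp hpd
        rw [ha, hb, mul_zero]
      · have hbd : x ⟨n + 1, by omega⟩ ^ d ≠ 0 := pow_ne_zero _ hb
        have hω : (x ⟨n, by omega⟩ / (ζ * x ⟨n + 1, by omega⟩)) ^ d = 1 := by
          rw [div_pow, mul_pow, hζd]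
          have had : x ⟨n, by omega⟩ ^ d = -x ⟨n + 1, by omega⟩ ^ d := by
            linear_combination h2
          rw [had]
          field_simp
        obtain ⟨i, hi, hpow⟩ := hprim.eq_pow_of_pow_eq_one hω
        refine ⟨⟨i, hi⟩, hxL, ?_⟩
        rw [eq_div_iff (mul_ne_zero hζ0 hb)] at hpow
        have : ((⟨i, hi⟩ : Fin d) : ℕ) = i := rfl
        rw [this, ← hpow, ← pow_mul, pow_add, pow_one]
        ring
    · rintro ⟨j, hxL, hxn⟩
      refine ⟨hxL, ?_⟩
      show ∑ i : Fin (n + 2), x i ^ d = 0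
      rw [hsum x hxL, hxn, mul_pow, ← pow_mul, show (1 + 2 * (j : ℕ)) * d = d * (1 + 2 * (j : ℕ)) by ring,
        pow_mul, hζd, (show Odd (1 + 2 * (j : ℕ)) from ⟨j, by ring⟩).neg_one_pow]
      ring
  · intro j j' hjj'
    ext x
    simp only [Set.mem_inter_iff, Set.mem_setOf_eq]
    constructor
    · rintro ⟨⟨hxL, hj⟩, ⟨-, hj'⟩⟩
      have hne : ζ ^ (1 + 2 * (j : ℕ)) ≠ ζ ^ (1 + 2 * (j' : ℕ)) := by
        intro h
        apply hjj'
        have h' : ζ * ζ ^ (2 * (j : ℕ)) = ζ * ζ ^ (2 * (j' : ℕ)) := by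
          calc ζ * ζ ^ (2 * (j : ℕ)) = ζ ^ (1 + 2 * (j : ℕ)) := by rw [pow_add, pow_one]
            _ = ζ ^ (1 + 2 * (j' : ℕ)) := h
            _ = ζ * ζ ^ (2 * (j' : ℕ)) := by rw [pow_add, pow_one]
        have h2 := mul_left_cancel₀ hζ0 h'
        rw [pow_mul, pow_mul] at h2
        exact Fin.ext (hprim.pow_inj j.isLt j'.isLt h2)
      have hb : x ⟨n + 1, by omega⟩ = 0 := by
        by_contra hb
        exact hne (mul_right_cancel₀ hb (hj ▸ hj'))
      exact ⟨hxL, by rw [hj, hb, mul_zero], hb⟩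
    · rintro ⟨hxL, ha, hb⟩
      exact ⟨⟨hxL, by rw [ha, hb, mul_zero]⟩, ⟨hxL, by rw [ha, hb, mul_zero]⟩⟩
end
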